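/- Let G be a finite simple graph of order n ≥ 3 with no isolated vertex such that γ_oitR(G) > γ_oiR(G). Then max{γ_{t,oi}(G), γ_oiR(G)} + 1 ≤ γ_oitR(G) ≤ min{γ_{t,oi}(G), γ_oiR(G)} + γ(G). -/

import Mathlib

namespace OITRPaper

variable {V : Type*}

/-- `S` is a vertex cover of `G`: every edge of `G` is incident to a vertex of `S`. -/
def IsVertexCover (G : SimpleGraph V) (S : Set V) : Prop :=
  ∀ ⦃u v : V⦄, G.Adj u v → u ∈ S ∨ v ∈ S

/-- `S` is an independent set of `G`: no two vertices of `S` are adjacent. -/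
def IsIndepSet (G : SimpleGraph V) (S : Set V) : Prop :=
  ∀ ⦃u : V⦄, u ∈ S → ∀ ⦃v : V⦄, v ∈ S → ¬ G.Adj u v

/-- `S` is a dominating set of `G`. -/
def IsDomSet (G : SimpleGraph V) (S : Set V) : Prop :=
  ∀ v : V, v ∉ S → ∃ u ∈ S, G.Adj v u

/-- `S` is a total dominating set of `G`: every vertex has a neighbor in `S`. -/
def IsTotalDomSet (G : SimpleGraph V) (S : Set V) : Prop :=
  ∀ v : V, ∃ u ∈ S, G.Adj v u

/-- `G` is claw-free: it contains no induced `K_{1,3}`. -/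
def ClawFree (G : SimpleGraph V) : Prop :=
  ∀ c a b d : V, G.Adj c a → G.Adj c b → G.Adj c d →
    a ≠ b → a ≠ d → b ≠ d → G.Adj a b ∨ G.Adj a d ∨ G.Adj b d

/-- `f` is a Roman dominating function on `G`. -/
def IsRDF (G : SimpleGraph V) (f : V → ℕ) : Prop :=
  (∀ v, f v ≤ 2) ∧ ∀ v, f v = 0 → ∃ u, G.Adj v u ∧ f u = 2

/-- `f` is an outer-independent Roman dominating function on `G`. -/
def IsOIRDF (G : SimpleGraph V) (f : V → ℕ) : Prop :=
  IsRDF G f ∧ IsIndepSet G {v | f v = 0}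

/-- `f` is an outer-independent total Roman dominating function on `G`. -/
def IsOITRDF (G : SimpleGraph V) (f : V → ℕ) : Prop :=
  IsOIRDF G f ∧ ∀ v, 1 ≤ f v → ∃ u, G.Adj v u ∧ 1 ≤ f u

variable [Fintype V]

/-- The vertex cover number `α(G)`. -/
noncomputable def vertexCoverNum (G : SimpleGraph V) : ℕ :=
  sInf {m | ∃ S : Set V, IsVertexCover G S ∧ S.ncard = m}

/-- The independence number `β(G)`. -/
noncomputable def indepNum (G : SimpleGraph V) : ℕ :=
  sSup {m | ∃ S : Set V, IsIndepSet G S ∧ S.ncard = m}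

/-- The domination number `γ(G)`. -/
noncomputable def domNum (G : SimpleGraph V) : ℕ :=
  sInf {m | ∃ S : Set V, IsDomSet G S ∧ S.ncard = m}

/-- The total domination number `γ_t(G)`. -/
noncomputable def totalDomNum (G : SimpleGraph V) : ℕ :=
  sInf {m | ∃ S : Set V, IsTotalDomSet G S ∧ S.ncard = m}

/-- The outer-independent total domination number `γ_{t,oi}(G)`. -/
noncomputable def oiTotalDomNum (G : SimpleGraph V) : ℕ :=
  sInf {m | ∃ S : Set V, IsTotalDomSet G S ∧ IsIndepSet G Sᶜ ∧ S.ncard = m}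

/-- The Roman domination number `γ_R(G)`. -/
noncomputable def romanDomNum (G : SimpleGraph V) : ℕ :=
  sInf {w | ∃ f : V → ℕ, IsRDF G f ∧ ∑ v, f v = w}

/-- The outer-independent Roman domination number `γ_{oiR}(G)`. -/
noncomputable def oiRomanDomNum (G : SimpleGraph V) : ℕ :=
  sInf {w | ∃ f : V → ℕ, IsOIRDF G f ∧ ∑ v, f v = w}

/-- The outer-independent total Roman domination number `γ_{oitR}(G)`. -/
noncomputable def oitRomanDomNum (G : SimpleGraph V) : ℕ :=
  sInf {w | ∃ f : V → ℕ, IsOITRDF G f ∧ ∑ v, f v = w}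


set_option linter.unusedSectionVars false

private lemma ncard_eq_sum (S : Set V) [DecidablePred (· ∈ S)] :
    S.ncard = ∑ v, if v ∈ S then 1 else 0 := by
  rw [Set.ncard_eq_toFinset_card', Finset.card_eq_sum_ones, ← Finset.sum_filter]
  congr 1
  ext v; simp

variable {G : SimpleGraph V}

private lemma oir_mem :
    ∃ f : V → ℕ, IsOIRDF G f ∧ ∑ v, f v = oiRomanDomNum G := by
  have hne : {w | ∃ f : V → ℕ, IsOIRDF G f ∧ ∑ v, f v = w}.Nonempty := by
    refine ⟨∑ _v : V, (1:ℕ), fun _ => 1, ⟨⟨fun v => one_le_two, fun v h => by simp at h⟩,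
      fun u hu => by simp at hu⟩, rfl⟩
  exact Nat.sInf_mem hne

private lemma oitr_mem (hiso : ∀ v : V, ∃ u, G.Adj v u) :
    ∃ f : V → ℕ, IsOITRDF G f ∧ ∑ v, f v = oitRomanDomNum G := by
  have hne : {w | ∃ f : V → ℕ, IsOITRDF G f ∧ ∑ v, f v = w}.Nonempty := by
    refine ⟨∑ _v : V, (1:ℕ), fun _ => 1, ⟨⟨⟨fun v => one_le_two, fun v h => by simp at h⟩,
      fun u hu => by simp at hu⟩, ?_⟩, rfl⟩
    intro v _
    obtain ⟨u, hu⟩ := hiso v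
    exact ⟨u, hu, le_refl 1⟩
  exact Nat.sInf_mem hne

private lemma dom_mem :
    ∃ S : Set V, IsDomSet G S ∧ S.ncard = domNum G := by
  have hne : {m | ∃ S : Set V, IsDomSet G S ∧ S.ncard = m}.Nonempty :=
    ⟨(Set.univ : Set V).ncard, Set.univ, fun v hv => absurd (Set.mem_univ v) hv, rfl⟩
  exact Nat.sInf_mem hne

private lemma oitd_mem (hiso : ∀ v : V, ∃ u, G.Adj v u) :
    ∃ S : Set V, IsTotalDomSet G S ∧ IsIndepSet G Sᶜ ∧ S.ncard = oiTotalDomNum G := by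
  have hne : {m | ∃ S : Set V, IsTotalDomSet G S ∧ IsIndepSet G Sᶜ ∧ S.ncard = m}.Nonempty := by
    refine ⟨(Set.univ : Set V).ncard, Set.univ, ?_, ?_, rfl⟩
    · intro v; obtain ⟨u, hu⟩ := hiso v; exact ⟨u, Set.mem_univ u, hu⟩
    · intro u hu; simp at hu
  exact Nat.sInf_mem hne

private lemma le_toi_add_dom (hiso : ∀ v : V, ∃ u, G.Adj v u) :
    oitRomanDomNum G ≤ oiTotalDomNum G + domNum G := by
  classical
  obtain ⟨S, hStd, hSind, hScard⟩ := oitd_mem (G := G) hiso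
  obtain ⟨D, hDdom, hDcard⟩ := dom_mem (G := G)
  set f : V → ℕ := fun v => (if v ∈ S then 1 else 0) + (if v ∈ D then 1 else 0) with hfdef
  have hf : IsOITRDF G f := by
    refine ⟨⟨⟨fun v => ?_, fun v hv => ?_⟩, ?_⟩, ?_⟩
    · simp only [hfdef]; split <;> split <;> norm_num
    · have hvS : v ∉ S := by intro h; simp [hfdef, h] at hv
      have hvD : v ∉ D := by intro h; simp [hfdef, h] at hv
      obtain ⟨d, hdD, hadj⟩ := hDdom v hvD
      have hdS : d ∈ S := by
        by_contra hdS
        exact hSind hvS hdS hadj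
      exact ⟨d, hadj, by simp [hfdef, hdS, hdD]⟩
    · intro u hu w hw hadj
      have huS : u ∉ S := by intro h; simp only [Set.mem_setOf_eq, hfdef] at hu; simp [h] at hu
      have hwS : w ∉ S := by intro h; simp only [Set.mem_setOf_eq, hfdef] at hw; simp [h] at hw
      exact hSind huS hwS hadj
    · intro v _
      obtain ⟨u, huS, hadj⟩ := hStd v
      refine ⟨u, hadj, ?_⟩
      simp [hfdef, huS]
  have hle : oitRomanDomNum G ≤ ∑ v, f v := Nat.sInf_le ⟨f, hf, rfl⟩
  have hsum : ∑ v, f v = S.ncard + D.ncard := by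
    rw [ncard_eq_sum, ncard_eq_sum, ← Finset.sum_add_distrib]
  rw [hsum, hScard, hDcard] at hle
  exact hle

private lemma le_oir_add_dom (hiso : ∀ v : V, ∃ u, G.Adj v u) :
    oitRomanDomNum G ≤ oiRomanDomNum G + domNum G := by
  classical
  obtain ⟨g, ⟨⟨hg2, hg0⟩, hgind⟩, hgw⟩ := oir_mem (G := G)
  obtain ⟨D, hDdom, hDcard⟩ := dom_mem (G := G)
  choose c hc using hiso
  set Bad : Set V := {v | v ∈ D ∧ 1 ≤ g v ∧ ∀ u, G.Adj v u → g u = 0 ∧ u ∉ D} with hBad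
  set U : Set V := c '' Bad with hU
  set Z : Set V := {v | g v = 0} with hZ
  set f : V → ℕ := fun v => if v ∈ D ∪ U then max (g v) 1 else g v with hfdef
  have hfg : ∀ v, g v ≤ f v := by
    intro v; simp only [hfdef]
    split
    · exact le_max_left _ _
    · exact le_rfl
  have hf2 : ∀ v, g v = 2 → f v = 2 := by
    intro v h; simp only [hfdef]; split <;> simp [h]
  have hf : IsOITRDF G f := by
    refine ⟨⟨⟨fun v => ?_, fun v hv => ?_⟩, ?_⟩, ?_⟩
    · simp only [hfdef]; split
      · exact max_le (hg2 v) one_le_two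
      · exact hg2 v
    · have hgz : g v = 0 := by have := hfg v; omega
      obtain ⟨u, hadj, hu2⟩ := hg0 v hgz
      exact ⟨u, hadj, hf2 u hu2⟩
    · intro u hu w hw hadj
      have hu' : g u = 0 := by have := hfg u; have : f u = 0 := hu; omega
      have hw' : g w = 0 := by have := hfg w; have : f w = 0 := hw; omega
      exact hgind hu' hw' hadj
    · intro v _
      by_contra hno
      push_neg at hno
      have hall : ∀ u, G.Adj v u → f u = 0 := by
        intro u h; have := hno u h; omega
      have hallg : ∀ u, G.Adj v u → g u = 0 ∧ u ∉ D ∧ u ∉ U := by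
        intro u h
        have h0 := hall u h
        have hmem : u ∉ D ∪ U := by
          intro hmem
          have : f u = max (g u) 1 := by simp only [hfdef]; rw [if_pos hmem]
          omega
        have hgu : g u = 0 := by have := hfg u; omega
        exact ⟨hgu, fun hD => hmem (Or.inl hD), fun hU' => hmem (Or.inr hU')⟩
      rcases Nat.eq_zero_or_pos (g v) with hgv | hgv
      · obtain ⟨u, hadj, hu2⟩ := hg0 v hgv
        have := (hallg u hadj).1
        omega
      · rcases em (v ∈ D) with hvD | hvD
        · have hvBad : v ∈ Bad := ⟨hvD, hgv, fun u h => ⟨(hallg u h).1, (hallg u h).2.1⟩⟩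
          exact (hallg (c v) (hc v)).2.2 ⟨v, hvBad, rfl⟩
        · obtain ⟨d, hdD, hadj⟩ := hDdom v hvD
          exact (hallg d hadj).2.1 hdD
  have hle : oitRomanDomNum G ≤ ∑ v, f v := Nat.sInf_le ⟨f, hf, rfl⟩
  have hsum : ∑ v, f v ≤ ∑ v, g v + ((D ∪ U) ∩ Z).ncard := by
    rw [ncard_eq_sum, ← Finset.sum_add_distrib]
    apply Finset.sum_le_sum
    intro v _
    by_cases h1 : v ∈ D ∪ U
    · by_cases h2 : v ∈ Z
      · have hz : g v = 0 := h2
        simp only [hfdef, if_pos h1, if_pos (Set.mem_inter h1 h2)]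
        omega
      · have hz : ¬ g v = 0 := h2
        have : v ∉ (D ∪ U) ∩ Z := fun hm => h2 hm.2
        simp only [hfdef, if_pos h1, if_neg this]
        omega
    · have : v ∉ (D ∪ U) ∩ Z := fun hm => h1 hm.1
      simp only [hfdef, if_neg h1, if_neg this]
      omega
  have hcard2 : ((D ∪ U) ∩ Z).ncard ≤ D.ncard := by
    have hsub : (D ∪ U) ∩ Z ⊆ (D ∩ Z) ∪ U := by
      rintro v ⟨hv1 | hv1, hv2⟩
      · exact Or.inl ⟨hv1, hv2⟩
      · exact Or.inr hv1
    have hBadsub : Bad ⊆ D \ Z := by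
      rintro v ⟨hv1, hv2, _⟩
      exact ⟨hv1, by simp only [hZ, Set.mem_setOf_eq]; omega⟩
    calc ((D ∪ U) ∩ Z).ncard ≤ ((D ∩ Z) ∪ U).ncard :=
          Set.ncard_le_ncard hsub (Set.toFinite _)
      _ ≤ (D ∩ Z).ncard + U.ncard := Set.ncard_union_le _ _
      _ ≤ (D ∩ Z).ncard + Bad.ncard :=
          Nat.add_le_add_left (Set.ncard_image_le (Set.toFinite _)) _
      _ ≤ (D ∩ Z).ncard + (D \ Z).ncard :=
          Nat.add_le_add_left (Set.ncard_le_ncard hBadsub (Set.toFinite _)) _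
      _ = D.ncard := Set.ncard_inter_add_ncard_diff_eq_ncard D Z (Set.toFinite _)
  rw [hgw, hDcard] at *
  omega

private lemma toi_lt (hiso : ∀ v : V, ∃ u, G.Adj v u)
    (hgt : oiRomanDomNum G < oitRomanDomNum G) :
    oiTotalDomNum G < oitRomanDomNum G := by
  classical
  by_contra hle
  push_neg at hle
  obtain ⟨f, ⟨⟨⟨hf2, hf0⟩, hfind⟩, hftot⟩, hfw⟩ := oitr_mem hiso
  set S : Set V := {v | 1 ≤ f v} with hS
  have hStd : IsTotalDomSet G S := by
    intro v
    rcases Nat.eq_zero_or_pos (f v) with h | h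
    · obtain ⟨u, hadj, hu⟩ := hf0 v h
      exact ⟨u, by simp only [hS, Set.mem_setOf_eq]; omega, hadj⟩
    · obtain ⟨u, hadj, hu⟩ := hftot v h
      exact ⟨u, hu, hadj⟩
  have hSind : IsIndepSet G Sᶜ := by
    intro u hu w hw hadj
    have hu' : f u = 0 := by
      have : ¬ (1 ≤ f u) := hu
      omega
    have hw' : f w = 0 := by
      have : ¬ (1 ≤ f w) := hw
      omega
    exact hfind hu' hw' hadj
  have h1 : oiTotalDomNum G ≤ S.ncard := Nat.sInf_le ⟨S, hStd, hSind, rfl⟩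
  have h2 : S.ncard ≤ ∑ v, f v := by
    rw [ncard_eq_sum]
    apply Finset.sum_le_sum
    intro v _
    split
    · exact ‹v ∈ S›
    · exact Nat.zero_le _
  have hone : ∀ v, f v = 1 := by
    by_contra hne
    push_neg at hne
    obtain ⟨v, hv⟩ := hne
    have h2ex : ∃ u, 2 ≤ f u := by
      rcases Nat.eq_zero_or_pos (f v) with h0 | hp
      · obtain ⟨u, _, hu⟩ := hf0 v h0
        exact ⟨u, hu.ge⟩
      · exact ⟨v, by have := hf2 v; omega⟩
    obtain ⟨u, hu⟩ := h2ex
    have hstrict : S.ncard < ∑ w, f w := by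
      rw [ncard_eq_sum]
      apply Finset.sum_lt_sum
      · intro i _
        split
        · exact ‹i ∈ S›
        · exact Nat.zero_le _
      · refine ⟨u, Finset.mem_univ u, ?_⟩
        rw [if_pos (show u ∈ S by simp only [hS, Set.mem_setOf_eq]; omega)]
        omega
    omega
  have hn : oitRomanDomNum G = Fintype.card V := by
    rw [← hfw]
    simp [hone]
  by_cases hpend : ∀ x : V, ∃ p : V, G.Adj p x ∧ ∀ u, G.Adj p u → u = x
  · choose p hp1 hp2 using hpend
    have hpinj : Function.Injective p := by
      intro x y hxy
      exact (hp2 x y (by rw [hxy]; exact hp1 y)).symm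
    have hpsurj : Function.Surjective p := Finite.surjective_of_injective hpinj
    choose m hm using hpsurj
    have hmadj : ∀ v, G.Adj v (m v) := fun v => by
      have := hp1 (m v); rwa [hm v] at this
    have hmuniq : ∀ v u, G.Adj v u → u = m v := by
      intro v u h
      exact hp2 (m v) u (by rwa [hm v])
    have hminj : Function.Injective m := by
      intro a b hab
      rw [← hm a, ← hm b, hab]
    have hmbij : Function.Bijective m := ⟨hminj, Finite.surjective_of_injective hminj⟩
    obtain ⟨g, ⟨⟨hg2, hg0⟩, hgind⟩, hgw⟩ := oir_mem (G := G)
    have hpair : ∀ v, 2 ≤ g v + g (m v) := by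
      intro v
      rcases Nat.eq_zero_or_pos (g v) with h0 | hp'
      · obtain ⟨u, hadj, hu⟩ := hg0 v h0
        have heq := hmuniq v u hadj
        rw [heq] at hu
        omega
      · rcases Nat.eq_zero_or_pos (g (m v)) with h0' | hp''
        · obtain ⟨u, hadj, hu⟩ := hg0 (m v) h0'
          have h1 : u = m (m v) := hmuniq (m v) u hadj
          have h2 : v = m (m v) := hmuniq (m v) v (hmadj v).symm
          rw [h1, ← h2] at hu
          omega
        · omega
    have hsum2 : 2 * Fintype.card V ≤ ∑ v, (g v + g (m v)) := by
      have h := Finset.sum_le_sum (fun v (_ : v ∈ Finset.univ) => hpair v)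
      simpa [Finset.sum_const, Finset.card_univ, mul_comm] using h
    have hsplit : ∑ v, (g v + g (m v)) = ∑ v, g v + ∑ v, g (m v) := Finset.sum_add_distrib
    have hmb : ∑ v, g (m v) = ∑ v, g v :=
      Fintype.sum_bijective m hmbij _ _ (fun x => rfl)
    rw [hn] at hgt
    omega
  · push_neg at hpend
    obtain ⟨x, hx⟩ := hpend
    have hS' : IsTotalDomSet G ({x}ᶜ : Set V) := by
      intro v
      obtain ⟨u, hu⟩ := hiso v
      by_cases h : u = x
      · subst h
        obtain ⟨u', hu', hne⟩ := hx v hu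
        exact ⟨u', by simp [hne], hu'⟩
      · exact ⟨u, by simp [h], hu⟩
    have hind' : IsIndepSet G (({x}ᶜ : Set V)ᶜ) := by
      intro u hu w hw hadj
      simp only [compl_compl, Set.mem_singleton_iff] at hu hw
      subst hu; subst hw
      exact (hadj.ne rfl)
    have hle2 : oiTotalDomNum G ≤ ({x}ᶜ : Set V).ncard := Nat.sInf_le ⟨_, hS', hind', rfl⟩
    have hcc : ({x} : Set V).ncard + ({x}ᶜ : Set V).ncard = Fintype.card V := by
      rw [Set.ncard_add_ncard_compl]
      exact Nat.card_eq_fintype_card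
    rw [Set.ncard_singleton] at hcc
    omega


/-- For a graph of order `n ≥ 3` with no isolated vertex satisfying
`γ_oitR(G) > γ_oiR(G)`, one has
`max{γ_{t,oi}(G), γ_oiR(G)} + 1 ≤ γ_oitR(G) ≤ min{γ_{t,oi}(G), γ_oiR(G)} + γ(G)`. -/
theorem stmt10 {V : Type*} [Fintype V] (G : SimpleGraph V)
    (hcard : 3 ≤ Fintype.card V) (hiso : ∀ v : V, ∃ u, G.Adj v u)
    (hgt : oiRomanDomNum G < oitRomanDomNum G) :
    max (oiTotalDomNum G) (oiRomanDomNum G) + 1 ≤ oitRomanDomNum G ∧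
      oitRomanDomNum G ≤ min (oiTotalDomNum G) (oiRomanDomNum G) + domNum G := by
  have h1 : oiTotalDomNum G < oitRomanDomNum G := toi_lt hiso hgt
  have h2 : oitRomanDomNum G ≤ oiTotalDomNum G + domNum G := le_toi_add_dom hiso
  have h3 : oitRomanDomNum G ≤ oiRomanDomNum G + domNum G := le_oir_add_dom hiso
  exact ⟨by omega, by omega⟩

end OITRPaper
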